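/- arXiv:2403.01337 — 3 statements merged into one kernel-verified Lean document; each statement's English description precedes it below -/
import Mathlib

section
/- Let k be a natural number and let Γ be a row-finite, source-free k-graph. If Γ is simply connected, then there is a map f from the objects of Γ to ℤ^k such that for every morphism λ : X ⟶ Y of Γ, the degree d(λ), viewed in ℤ^k, equals f(X) − f(Y) (i.e. the degree of λ is the difference of the values of f at the source and range of λ). -/
open CategoryTheory

/-- A `k`-graph structure on a small category `Γ`. -/
structure KGraph (k : ℕ) (Λ : Type) [SmallCategory Λ] where
  d : ∀ {X Y : Λ}, (X ⟶ Y) → (Fin k → ℕ)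
  d_id : ∀ X : Λ, d (𝟙 X) = 0
  d_comp : ∀ {X Y Z : Λ} (f : X ⟶ Y) (g : Y ⟶ Z), d (f ≫ g) = d f + d g
  factorisation : ∀ {X Z : Λ} (f : X ⟶ Z) (m n : Fin k → ℕ), d f = m + n →
    ∃! t : Σ Y : Λ, (X ⟶ Y) × (Y ⟶ Z),
      d t.2.1 = m ∧ d t.2.2 = n ∧ t.2.1 ≫ t.2.2 = f

/-- `Γ` is row-finite and source-free: for every vertex `v` and degree `n`, the set of
morphisms of degree `n` with range `v` is finite and nonempty.  (Here a morphism
`f : u ⟶ v` has source `u` and range `v`.) -/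
def RowFiniteSourceFree {k : ℕ} {Γ : Type} [SmallCategory Γ] (S : KGraph k Γ) : Prop :=
  ∀ (v : Γ) (n : Fin k → ℕ),
    {t : Σ u : Γ, u ⟶ v | S.d t.2 = n}.Finite ∧ {t : Σ u : Γ, u ⟶ v | S.d t.2 = n}.Nonempty

/-- `Γ` is simply connected: the fundamental group at each vertex, i.e. the
endomorphism monoid of each object of the localization at all morphisms, is trivial. -/
def SimplyConnected (Γ : Type) [SmallCategory Γ] : Prop :=
  ∀ v : Γ, Subsingleton (End ((⊤ : MorphismProperty Γ).Q.obj v))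

/-- Every morphism of the localization at `⊤` is an isomorphism. -/
lemma isIso_of_localization_top {Γ : Type} [SmallCategory Γ]
    {X Y : (⊤ : MorphismProperty Γ).Localization} (f : X ⟶ Y) : IsIso f := by
  have : MorphismProperty.isomorphisms (⊤ : MorphismProperty Γ).Localization = ⊤ := by
    apply Localization.Construction.morphismProperty_eq_top
    · intro X Y f
      exact (Localization.Construction.wIso f trivial).isIso_hom
    · intro X Y w hw
      rw [MorphismProperty.isomorphisms.iff]
      infer_instance
  rw [← MorphismProperty.isomorphisms.iff, this]
  trivial

/-- if a row-finite source-free `k`-graph is simply connected, then its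
degree map is a coboundary: there is `f : Γ⁰ → ℤᵏ` with `d λ = f (s λ) - f (r λ)`. -/
theorem degree_is_coboundary_of_simplyConnected (k : ℕ) (Γ : Type) [SmallCategory Γ]
    (S : KGraph k Γ) (hrf : RowFiniteSourceFree S) (hsimp : SimplyConnected Γ) :
    ∃ f : Γ → (Fin k → ℤ),
      ∀ (X Y : Γ) (lam : X ⟶ Y), (fun i => (S.d lam i : ℤ)) = f X - f Y := by
  classical
  set W : MorphismProperty Γ := ⊤ with hW
  -- the degree functor into the group `ℤ^k`
  let G : Γ ⥤ SingleObj (Multiplicative (Fin k → ℤ)) :=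
    { obj := fun _ => SingleObj.star _
      map := fun {X Y} f => Multiplicative.ofAdd (fun i => (S.d f i : ℤ))
      map_id := fun X => by
        simp only [S.d_id]
        rfl
      map_comp := fun {X Y Z} f g => by
        change _ = Multiplicative.ofAdd _ * Multiplicative.ofAdd _
        rw [← ofAdd_add]
        congr 1
        funext i
        show ((S.d (f ≫ g) i : ℤ)) = ((S.d g i : ℤ) + (S.d f i : ℤ))
        rw [S.d_comp, Pi.add_apply]
        push_cast
        ring }
  have hG : W.IsInvertedBy G := fun X Y f _ => by
    change IsIso (G.map f)
    infer_instance
  let G' := Localization.Construction.lift G hG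
  have hfac : W.Q ⋙ G' = G := Localization.Construction.fac G hG
  -- hom-sets in the localization with fixed source are subsingletons
  have hsub : ∀ (X : Γ) (Z : W.Localization) (a b : W.Q.obj X ⟶ Z), a = b := by
    intro X Z a b
    have hb : IsIso b := isIso_of_localization_top b
    have := hsimp X
    have h1 : a ≫ inv b = 𝟙 (W.Q.obj X) :=
      Subsingleton.elim (α := End (W.Q.obj X)) _ _
    calc a = (a ≫ inv b) ≫ b := by simp
    _ = b := by rw [h1]; simp
  -- relation: connected in the localization
  let rel : Γ → Γ → Prop := fun X Y => Nonempty (W.Q.obj X ⟶ W.Q.obj Y)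
  have hrefl : ∀ X, rel X X := fun X => ⟨𝟙 _⟩
  have hsymm : ∀ {X Y}, rel X Y → rel Y X := by
    rintro X Y ⟨p⟩
    have := isIso_of_localization_top p
    exact ⟨inv p⟩
  have htrans : ∀ {X Y Z}, rel X Y → rel Y Z → rel X Z := by
    rintro X Y Z ⟨p⟩ ⟨q⟩; exact ⟨p ≫ q⟩
  let st : Setoid Γ := ⟨rel, hrefl, fun h => hsymm h, fun h h' => htrans h h'⟩
  let rep : Γ → Γ := fun X => (Quotient.mk st X).out
  have hrep : ∀ X : Γ, rel X (rep X) := by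
    intro X
    have : st.r X (rep X) := by
      apply Quotient.exact (s := st)
      simp [rep]
    exact this
  let p : ∀ X : Γ, (W.Q.obj X ⟶ W.Q.obj (rep X)) := fun X => (hrep X).some
  refine ⟨fun X => Multiplicative.toAdd (G'.map (p X)), ?_⟩
  intro X Y lam
  have hQ : ∀ {A B : Γ} (f : A ⟶ B), G'.map (W.Q.map f)
      = Multiplicative.ofAdd (fun i => (S.d f i : ℤ)) := by
    intro A B f
    have : (W.Q ⋙ G').map f = G.map f := by rw [hfac]
    exact this
  have hcomp : rep X = rep Y := by
    have : Quotient.mk st X = Quotient.mk st Y := Quotient.sound (⟨W.Q.map lam⟩ : st.r X Y)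
    simp only [rep, this]
  have h' : W.Q.obj (rep Y) = W.Q.obj (rep X) := by rw [hcomp]
  have key : p X = W.Q.map lam ≫ (p Y ≫ eqToHom h') := hsub X _ _ _
  have this1 := congrArg G'.map key
  simp only [Functor.map_comp] at this1
  rw [hQ lam] at this1
  have heq : ∀ {A B : W.Localization} (h : A = B),
      G'.map (eqToHom h) = (1 : Multiplicative (Fin k → ℤ)) := by
    rintro A B rfl
    rw [eqToHom_refl, G'.map_id]
    rfl
  have h2 : (G'.map (p X) : Multiplicative (Fin k → ℤ))
      = ((1 : Multiplicative (Fin k → ℤ)) * G'.map (p Y))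
          * Multiplicative.ofAdd (fun i => (S.d lam i : ℤ)) := by
    rw [← heq h']
    exact this1
  have h3 := congrArg Multiplicative.toAdd h2
  rw [toAdd_mul, toAdd_mul, toAdd_ofAdd, toAdd_one] at h3
  funext i
  have h4 := congrFun h3 i
  simp only [Pi.add_apply, Pi.zero_apply, Pi.sub_apply] at h4 ⊢
  omega
end

section
/- Let k be a natural number and let Γ be a row-finite, source-free k-graph. The orbit space Γ^∞/≃ (the quotient of the infinite path space of Γ by shift equivalence, with the quotient topology) is Hausdorff if and only if for every pair of infinite paths x, y ∈ Γ^∞ with x not shift equivalent to y, there exists N ∈ ℕ^k such that no object u of Γ admits both a morphism u ⟶ x(N) and a morphism u ⟶ y(N) (i.e. the vertices x(N) and y(N) have no common upper bound: s(μ) ≠ s(ν) for all μ with range x(N) and ν with range y(N)). -/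
open CategoryTheory

/-- An infinite path in a `k`-graph `Γ`: a (degree-preserving) functor from the opposite
of the poset category `(Fin k → ℕ, ≤)` to `Γ`, given concretely by its action `vertex`
on objects and `edge` on morphisms. -/
structure InfPath {k : ℕ} {Γ : Type} [SmallCategory Γ] (S : KGraph k Γ) where
  vertex : (Fin k → ℕ) → Γ
  edge : ∀ m n : Fin k → ℕ, m ≤ n → (vertex n ⟶ vertex m)
  edge_refl : ∀ n, edge n n le_rfl = 𝟙 (vertex n)
  edge_comp : ∀ (m n p : Fin k → ℕ) (h₁ : m ≤ n) (h₂ : n ≤ p),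
    edge m p (h₁.trans h₂) = edge n p h₂ ≫ edge m n h₁
  deg : ∀ (m n : Fin k → ℕ) (h : m ≤ n), S.d (edge m n h) = n - m

namespace InfPath

variable {k : ℕ} {Γ : Type} [SmallCategory Γ] {S : KGraph k Γ}

/-- The shift `σ^p x` of an infinite path `x`. -/
def shift (p : Fin k → ℕ) (x : InfPath S) : InfPath S where
  vertex n := x.vertex (n + p)
  edge m n h := x.edge (m + p) (n + p) (add_le_add h le_rfl)
  edge_refl n := x.edge_refl (n + p)
  edge_comp m n q h₁ h₂ := x.edge_comp (m + p) (n + p) (q + p) _ _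
  deg m n h := by
    rw [x.deg]
    funext i
    simp [Nat.add_sub_add_right]

/-- Shift equivalence of infinite paths. -/
def ShiftEquiv (x y : InfPath S) : Prop := ∃ p q, shift p x = shift q y

/-- The cylinder set of a morphism `lam : X ⟶ Y`: infinite paths whose initial segment
of degree `d lam` is `lam`. -/
def cyl {X Y : Γ} (lam : X ⟶ Y) : Set (InfPath S) :=
  {x | ∃ (h₁ : x.vertex (S.d lam) = X) (h₀ : x.vertex 0 = Y),
    x.edge 0 (S.d lam) zero_le = eqToHom h₁ ≫ lam ≫ eqToHom h₀.symm}

/-- The topology on the infinite path space, generated by the cylinder sets. -/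
def pathTopology (S : KGraph k Γ) : TopologicalSpace (InfPath S) :=
  TopologicalSpace.generateFrom {U | ∃ (X Y : Γ) (lam : X ⟶ Y), U = cyl lam}

/-- The quotient topology on the orbit space `Γ^∞/≃` of the infinite path space by
shift equivalence. -/
def orbitTopology (S : KGraph k Γ) :
    TopologicalSpace (Quot (ShiftEquiv (S := S))) :=
  (pathTopology S).coinduced (Quot.mk _)

end InfPath

open InfPath

namespace KGP
open Topology
variable {k : ℕ} {Γ : Type} [SmallCategory Γ] {S : KGraph k Γ}

lemma d_eqToHom {X Y : Γ} (e : X = Y) : S.d (eqToHom e) = 0 := by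
  subst e; rw [eqToHom_refl]; exact S.d_id X

lemma triple_ext {X Z : Γ} {t t' : Σ Y : Γ, (X ⟶ Y) × (Y ⟶ Z)} (h : t = t') :
    ∃ e : t.1 = t'.1, (t.2.1 ≫ eqToHom e = t'.2.1) ∧ (t.2.2 = eqToHom e ≫ t'.2.2) := by
  subst h; exact ⟨rfl, by simp, by simp⟩

lemma eq_of_d_eq_zero {X Z : Γ} (f : X ⟶ Z) (hf : S.d f = 0) :
    ∃ e : X = Z, f = eqToHom e := by
  have hfac := S.factorisation f 0 0 (by rw [hf]; simp)
  have h1 : S.d ((⟨Z, f, 𝟙 Z⟩ : Σ Y : Γ, (X ⟶ Y) × (Y ⟶ Z)).2.1) = 0 ∧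
      S.d ((⟨Z, f, 𝟙 Z⟩ : Σ Y : Γ, (X ⟶ Y) × (Y ⟶ Z)).2.2) = 0 ∧
      (⟨Z, f, 𝟙 Z⟩ : Σ Y : Γ, (X ⟶ Y) × (Y ⟶ Z)).2.1 ≫ (⟨Z, f, 𝟙 Z⟩ : Σ Y : Γ, (X ⟶ Y) × (Y ⟶ Z)).2.2 = f :=
    ⟨hf, S.d_id Z, by simp⟩
  have h2 : S.d ((⟨X, 𝟙 X, f⟩ : Σ Y : Γ, (X ⟶ Y) × (Y ⟶ Z)).2.1) = 0 ∧
      S.d ((⟨X, 𝟙 X, f⟩ : Σ Y : Γ, (X ⟶ Y) × (Y ⟶ Z)).2.2) = 0 ∧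
      (⟨X, 𝟙 X, f⟩ : Σ Y : Γ, (X ⟶ Y) × (Y ⟶ Z)).2.1 ≫ (⟨X, 𝟙 X, f⟩ : Σ Y : Γ, (X ⟶ Y) × (Y ⟶ Z)).2.2 = f :=
    ⟨S.d_id X, hf, by simp⟩
  obtain ⟨e, he1, he2⟩ := triple_ext (hfac.unique h1 h2)
  refine ⟨e.symm, ?_⟩
  simp only at he1
  calc f = (f ≫ eqToHom e) ≫ eqToHom e.symm := by simp
    _ = 𝟙 X ≫ eqToHom e.symm := by rw [he1]
    _ = eqToHom e.symm := by simp

lemma path_ext {x y : InfPath S} (hv : x.vertex = y.vertex)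
    (he : ∀ m n (h : m ≤ n), x.edge m n h =
      eqToHom (congrFun hv n) ≫ y.edge m n h ≫ eqToHom (congrFun hv m).symm) :
    x = y := by
  obtain ⟨xv, xe, hr, hc, hd⟩ := x
  obtain ⟨yv, ye, hr', hc', hd'⟩ := y
  dsimp at hv
  subst hv
  simp only [eqToHom_refl, Category.comp_id, Category.id_comp] at he
  have : xe = ye := by
    funext m n h
    exact he m n h
  subst this
  rfl

lemma edge_congr (x : InfPath S) {m n m' n' : Fin k → ℕ} (em : m = m') (en : n = n')
    (h : m ≤ n) : x.edge m n h =
      eqToHom (congrArg x.vertex en) ≫ x.edge m' n' (em ▸ en ▸ h) ≫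
        eqToHom (congrArg x.vertex em).symm := by
  subst em; subst en; simp

lemma shift_shift (a b : Fin k → ℕ) (x : InfPath S) :
    shift a (shift b x) = shift (a + b) x := by
  have hv : (shift a (shift b x)).vertex = (shift (a + b) x).vertex := by
    funext n
    show x.vertex ((n + a) + b) = x.vertex (n + (a + b))
    rw [add_assoc]
  refine path_ext hv ?_
  intro m n h
  show x.edge ((m + a) + b) ((n + a) + b) _ = _
  rw [edge_congr x (show (m+a)+b = m + (a+b) by rw [add_assoc]) (show (n+a)+b = n + (a+b) by rw [add_assoc])]
  rfl

lemma shiftEquiv_refl (x : InfPath S) : ShiftEquiv x x := ⟨0, 0, rfl⟩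

lemma shiftEquiv_symm {x y : InfPath S} (h : ShiftEquiv x y) : ShiftEquiv y x := by
  obtain ⟨p, q, h⟩ := h; exact ⟨q, p, h.symm⟩

lemma shiftEquiv_trans {x y z : InfPath S} (h1 : ShiftEquiv x y) (h2 : ShiftEquiv y z) :
    ShiftEquiv x z := by
  obtain ⟨p, q, h1⟩ := h1
  obtain ⟨p', q', h2⟩ := h2
  refine ⟨p + p', q' + q, ?_⟩
  calc shift (p + p') x = shift (p' + p) x := by rw [add_comm]
    _ = shift p' (shift p x) := (shift_shift p' p x).symm
    _ = shift p' (shift q y) := by rw [h1]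
    _ = shift (p' + q) y := shift_shift p' q y
    _ = shift (q + p') y := by rw [add_comm]
    _ = shift q (shift p' y) := (shift_shift q p' y).symm
    _ = shift q (shift q' z) := by rw [h2]
    _ = shift (q + q') z := shift_shift q q' z
    _ = shift (q' + q) z := by rw [add_comm]

lemma eqvGen_iff {x y : InfPath S} :
    Relation.EqvGen (ShiftEquiv (S := S)) x y ↔ ShiftEquiv x y := by
  constructor
  · intro h
    induction h with
    | rel _ _ h => exact h
    | refl _ => exact shiftEquiv_refl _
    | symm _ _ _ ih => exact shiftEquiv_symm ih
    | trans _ _ _ _ _ ih1 ih2 => exact shiftEquiv_trans ih1 ih2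
  · exact Relation.EqvGen.rel x y

lemma quot_mk_eq_iff {x y : InfPath S} :
    Quot.mk (ShiftEquiv (S := S)) x = Quot.mk (ShiftEquiv (S := S)) y ↔ ShiftEquiv x y := by
  rw [Quot.eq, eqvGen_iff]

/-- `P S f m n t`: `t` is a factorisation of `f` into parts of degree `m`, `n`. -/
def P {X Z : Γ} (f : X ⟶ Z) (m n : Fin k → ℕ) (t : Σ Y : Γ, (X ⟶ Y) × (Y ⟶ Z)) : Prop :=
  S.d t.2.1 = m ∧ S.d t.2.2 = n ∧ t.2.1 ≫ t.2.2 = f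

lemma key_of_agree {x y : InfPath S} {b : Γ}
    (Hx : ∀ n, x.vertex n ⟶ b) (Hy : ∀ n, y.vertex n ⟶ b)
    (hdx : ∀ n, S.d (Hx n) = n) (hcx : ∀ m n (h : m ≤ n), x.edge m n h ≫ Hx m = Hx n)
    (hdy : ∀ n, S.d (Hy n) = n) (hcy : ∀ m n (h : m ≤ n), y.edge m n h ≫ Hy m = Hy n)
    (hagree : ∀ n : Fin k → ℕ, ∃ N, n ≤ N ∧ ∃ e : x.vertex N = y.vertex N,
      Hx N = eqToHom e ≫ Hy N) :
    ∀ n, ∃ e : x.vertex n = y.vertex n, Hx n = eqToHom e ≫ Hy n := by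
  intro n
  obtain ⟨N, hnN, e, hE⟩ := hagree n
  have hfac := S.factorisation (Hx N) (N - n) n
    (by rw [hdx]; funext i; have h' : n i ≤ N i := hnN i; simp; omega)
  have h1 : P (S := S) (Hx N) (N - n) n ⟨x.vertex n, x.edge n N hnN, Hx n⟩ :=
    ⟨x.deg n N hnN, hdx n, hcx n N hnN⟩
  have h2 : P (S := S) (Hx N) (N - n) n ⟨y.vertex n, eqToHom e ≫ y.edge n N hnN, Hy n⟩ := by
    refine ⟨?_, hdy n, ?_⟩
    · rw [S.d_comp, d_eqToHom, y.deg, zero_add]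
    · rw [Category.assoc, hcy n N hnN, ← hE]
  obtain ⟨e', _, h2'⟩ := triple_ext (hfac.unique h1 h2)
  exact ⟨e', h2'⟩

/-- Two paths with compatible "head" systems to a common base, agreeing at a cofinal
set of degrees, are equal. -/
lemma paths_eq_of_sys {x y : InfPath S} {b : Γ}
    (Hx : ∀ n, x.vertex n ⟶ b) (Hy : ∀ n, y.vertex n ⟶ b)
    (hdx : ∀ n, S.d (Hx n) = n) (hcx : ∀ m n (h : m ≤ n), x.edge m n h ≫ Hx m = Hx n)
    (hdy : ∀ n, S.d (Hy n) = n) (hcy : ∀ m n (h : m ≤ n), y.edge m n h ≫ Hy m = Hy n)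
    (hagree : ∀ n : Fin k → ℕ, ∃ N, n ≤ N ∧ ∃ e : x.vertex N = y.vertex N,
      Hx N = eqToHom e ≫ Hy N) :
    x = y := by
  have key := key_of_agree Hx Hy hdx hcx hdy hcy hagree
  have hv : x.vertex = y.vertex := funext fun n => (key n).choose
  refine path_ext hv ?_
  intro m n h
  obtain ⟨en, hn⟩ := key n
  obtain ⟨em, hm⟩ := key m
  -- the candidate morphism through y
  set q : x.vertex n ⟶ x.vertex m := eqToHom en ≫ y.edge m n h ≫ eqToHom em.symm with hq
  have hdq : S.d q = n - m := by
    rw [hq, S.d_comp, S.d_comp, d_eqToHom, d_eqToHom, y.deg, zero_add, add_zero]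
  have hqc : q ≫ Hx m = Hx n := by
    rw [hq, hm, hn]
    simp [hcy m n h]
  have hfac := S.factorisation (Hx n) (n - m) m
    (by rw [hdx]; funext i; have h' : m i ≤ n i := h i; simp; omega)
  have h1 : P (S := S) (Hx n) (n - m) m ⟨x.vertex m, x.edge m n h, Hx m⟩ :=
    ⟨x.deg m n h, hdx m, hcx m n h⟩
  have h2 : P (S := S) (Hx n) (n - m) m ⟨x.vertex m, q, Hx m⟩ := ⟨hdq, hdx m, hqc⟩
  obtain ⟨e', h1', _⟩ := triple_ext (hfac.unique h1 h2)
  simp only at h1'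
  rw [Subsingleton.elim e' rfl, eqToHom_refl, Category.comp_id] at h1'
  rw [h1', hq, Subsingleton.elim en (congrFun hv n), Subsingleton.elim em (congrFun hv m)]

/-- Composite of the transition maps of a tower. -/
def tcomp (v : ℕ → Γ) (t : ∀ j, v (j+1) ⟶ v j) : ∀ j, v j ⟶ v 0
  | 0 => 𝟙 _
  | (j+1) => t j ≫ tcomp v t j

section Tower

variable {D : ℕ → Fin k → ℕ} {v : ℕ → Γ} {t : ∀ j, v (j+1) ⟶ v j}

lemma d_tcomp (hD0 : D 0 = 0) (ht : ∀ j, S.d (t j) = D (j+1) - D j)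
    (hmono : ∀ j, D j ≤ D (j+1)) (j : ℕ) : S.d (tcomp v t j) = D j := by
  induction j with
  | zero => rw [hD0]; exact S.d_id _
  | succ j ih =>
      show S.d (t j ≫ tcomp v t j) = D (j+1)
      rw [S.d_comp, ht, ih]
      funext i
      have h' : D j i ≤ D (j+1) i := hmono j i
      simp
      omega

lemma tower_coh (hD0 : D 0 = 0) (ht : ∀ j, S.d (t j) = D (j+1) - D j)
    (hmono : ∀ j, D j ≤ D (j+1)) :
    ∀ i j, i ≤ j → ∃ g : v j ⟶ v i, S.d g = D j - D i ∧ g ≫ tcomp v t i = tcomp v t j := by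
  have hMono : Monotone D := monotone_nat_of_le_succ hmono
  intro i j hij
  induction j with
  | zero =>
      have : i = 0 := Nat.le_zero.mp hij
      subst this
      exact ⟨𝟙 _, by rw [S.d_id]; funext l; simp, by simp⟩
  | succ j ih =>
      rcases Nat.lt_or_ge i (j+1) with hlt | hge
      · have hij' : i ≤ j := Nat.lt_succ_iff.mp hlt
        obtain ⟨g, hg1, hg2⟩ := ih hij'
        refine ⟨t j ≫ g, ?_, ?_⟩
        · rw [S.d_comp, ht, hg1]
          funext l
          have h1 : D i l ≤ D j l := hMono hij' l
          have h2 : D j l ≤ D (j+1) l := hmono j l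
          simp
          omega
        · rw [Category.assoc, hg2]; rfl
      · have : i = j + 1 := le_antisymm hij hge
        subst this
        exact ⟨𝟙 _, by rw [S.d_id]; funext l; simp, by simp⟩

/-- The main tower construction: any tower with cofinal degrees extends to an
infinite path, together with a coherent system of "head" morphisms to the base. -/
lemma tower_path (hD0 : D 0 = 0) (hmono : ∀ j, D j ≤ D (j+1))
    (hcof : ∀ n : Fin k → ℕ, ∃ j, n ≤ D j) (ht : ∀ j, S.d (t j) = D (j+1) - D j) :
    ∃ (z : InfPath S) (H : ∀ n, z.vertex n ⟶ v 0),
      (∀ n, S.d (H n) = n) ∧ (∀ m n (h : m ≤ n), z.edge m n h ≫ H m = H n) ∧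
      (∀ j, ∃ e : z.vertex (D j) = v j, H (D j) = eqToHom e ≫ tcomp v t j) := by
  classical
  have hMono : Monotone D := monotone_nat_of_le_succ hmono
  set c : ∀ j, v j ⟶ v 0 := tcomp v t with hc
  have hdc : ∀ j, S.d (c j) = D j := d_tcomp hD0 ht hmono
  have coh := tower_coh (S := S) hD0 ht hmono
  -- the canonical vertex and head at each degree
  have master : ∀ n : Fin k → ℕ, ∃ (Y : Γ) (hd : Y ⟶ v 0), S.d hd = n ∧
      ∀ j, n ≤ D j → ∃ g : v j ⟶ Y, S.d g = D j - n ∧ g ≫ hd = c j := by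
    intro n
    obtain ⟨j₀, hj₀⟩ := hcof n
    have hfac := S.factorisation (c j₀) (D j₀ - n) n
      (by rw [hdc]; funext i; have h' : n i ≤ D j₀ i := hj₀ i; simp; omega)
    obtain ⟨⟨Y, a, b⟩, ⟨ha, hb, hab⟩, -⟩ := hfac
    refine ⟨Y, b, hb, ?_⟩
    intro j hj
    rcases le_total j₀ j with hle | hle
    · obtain ⟨g, hg1, hg2⟩ := coh j₀ j hle
      refine ⟨g ≫ a, ?_, ?_⟩
      · rw [S.d_comp, hg1, ha]
        funext l
        have h1 : n l ≤ D j₀ l := hj₀ l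
        have h2 : D j₀ l ≤ D j l := hMono hle l
        simp
        omega
      · rw [Category.assoc, hab, hg2]
    · obtain ⟨g, hg1, hg2⟩ := coh j j₀ hle
      have hfac' := S.factorisation (c j) (D j - n) n
        (by rw [hdc]; funext i; have h' : n i ≤ D j i := hj i; simp; omega)
      obtain ⟨⟨Y', a', b'⟩, ⟨ha', hb', hab'⟩, -⟩ := hfac'
      have h1 : P (S := S) (c j₀) (D j₀ - n) n ⟨Y', g ≫ a', b'⟩ := by
        refine ⟨?_, hb', ?_⟩
        · rw [S.d_comp, hg1, ha']
          funext l
          have h1 : n l ≤ D j l := hj l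
          have h2 : D j l ≤ D j₀ l := hMono hle l
          simp
          omega
        · rw [Category.assoc, hab', hg2]
      have h2 : P (S := S) (c j₀) (D j₀ - n) n ⟨Y, a, b⟩ := ⟨ha, hb, hab⟩
      have hfac2 := S.factorisation (c j₀) (D j₀ - n) n
        (by rw [hdc]; funext i; have h' : n i ≤ D j₀ i := hj₀ i; simp; omega)
      obtain ⟨e, he1, he2⟩ := triple_ext (hfac2.unique h1 h2)
      simp only at he1 he2
      refine ⟨a' ≫ eqToHom e, ?_, ?_⟩
      · rw [S.d_comp, ha', d_eqToHom, add_zero]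
      · rw [Category.assoc, ← he2, hab']
  choose vtx hd hdeg hmaster using master
  -- edges
  have edgeE : ∀ m n : Fin k → ℕ, m ≤ n →
      ∃ q : vtx n ⟶ vtx m, S.d q = n - m ∧ q ≫ hd m = hd n := by
    intro m n hmn
    obtain ⟨j, hj⟩ := hcof n
    have hmj : m ≤ D j := le_trans hmn hj
    obtain ⟨gn, hgn1, hgn2⟩ := hmaster n j hj
    obtain ⟨gm, hgm1, hgm2⟩ := hmaster m j hmj
    have hfacn := S.factorisation (hd n) (n - m) m
      (by rw [hdeg]; funext i; have h' : m i ≤ n i := hmn i; simp; omega)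
    obtain ⟨⟨Y, a, b⟩, ⟨ha, hb, hab⟩, -⟩ := hfacn
    have h1 : P (S := S) (c j) (D j - m) m ⟨Y, gn ≫ a, b⟩ := by
      refine ⟨?_, hb, ?_⟩
      · rw [S.d_comp, hgn1, ha]
        funext l
        have h1 : m l ≤ n l := hmn l
        have h2 : n l ≤ D j l := hj l
        simp
        omega
      · rw [Category.assoc, hab, hgn2]
    have h2 : P (S := S) (c j) (D j - m) m ⟨vtx m, gm, hd m⟩ := ⟨hgm1, hdeg m, hgm2⟩
    have hfac := S.factorisation (c j) (D j - m) m
      (by rw [hdc]; funext i; have h' : m i ≤ D j i := hmj i; simp; omega)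
    obtain ⟨e, he1, he2⟩ := triple_ext (hfac.unique h1 h2)
    simp only at he1 he2
    refine ⟨a ≫ eqToHom e, ?_, ?_⟩
    · rw [S.d_comp, ha, d_eqToHom, add_zero]
    · rw [Category.assoc, ← he2, hab]
  have edgeU : ∀ (m n : Fin k → ℕ) (hmn : m ≤ n) (q q' : vtx n ⟶ vtx m),
      S.d q = n - m → S.d q' = n - m → q ≫ hd m = hd n → q' ≫ hd m = hd n → q = q' := by
    intro m n hmn q q' hq hq' hqc hqc'
    have hfac := S.factorisation (hd n) (n - m) m
      (by rw [hdeg]; funext i; have h' : m i ≤ n i := hmn i; simp; omega)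
    have h1 : P (S := S) (hd n) (n - m) m ⟨vtx m, q, hd m⟩ := ⟨hq, hdeg m, hqc⟩
    have h2 : P (S := S) (hd n) (n - m) m ⟨vtx m, q', hd m⟩ := ⟨hq', hdeg m, hqc'⟩
    obtain ⟨e, he1, -⟩ := triple_ext (hfac.unique h1 h2)
    simp only at he1
    rw [Subsingleton.elim e rfl, eqToHom_refl, Category.comp_id] at he1
    exact he1
  choose edg hedg1 hedg2 using edgeE
  refine ⟨⟨vtx, edg, ?_, ?_, hedg1⟩, hd, hdeg, hedg2, ?_⟩
  · intro n
    refine edgeU n n le_rfl _ _ (hedg1 n n le_rfl) ?_ (hedg2 n n le_rfl) (by simp)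
    rw [S.d_id]; funext i; simp
  · intro m n p h₁ h₂
    refine edgeU m p (h₁.trans h₂) _ _ (hedg1 m p (h₁.trans h₂)) ?_
      (hedg2 m p (h₁.trans h₂)) ?_
    · rw [S.d_comp, hedg1, hedg1]
      funext i
      have hm : m i ≤ n i := h₁ i
      have hn : n i ≤ p i := h₂ i
      simp
      omega
    · rw [Category.assoc, hedg2, hedg2]
  · intro j
    obtain ⟨g, hg1, hg2⟩ := hmaster (D j) j le_rfl
    have hg0 : S.d g = 0 := by rw [hg1]; funext i; simp
    obtain ⟨e, he⟩ := eq_of_d_eq_zero g hg0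
    refine ⟨e.symm, ?_⟩
    rw [he] at hg2
    calc hd (D j) = eqToHom e.symm ≫ eqToHom e ≫ hd (D j) := by simp
      _ = eqToHom e.symm ≫ tcomp v t j := by rw [hg2]

end Tower

lemma self_mem_cyl (x : InfPath S) (r : Fin k → ℕ) :
    x ∈ cyl (S := S) (x.edge 0 r zero_le) := by
  have er : S.d (x.edge 0 r zero_le) = r := by rw [x.deg]; funext i; simp
  refine ⟨congrArg x.vertex er, rfl, ?_⟩
  rw [edge_congr x rfl er zero_le]

lemma cyl_comp_sub {A X Y : Γ} (g : A ⟶ X) (lam : X ⟶ Y) :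
    cyl (S := S) (g ≫ lam) ⊆ cyl (S := S) lam := by
  rintro w ⟨h₁, h₀, heq⟩
  have hle : S.d lam ≤ S.d (g ≫ lam) := by rw [S.d_comp]; exact le_add_self
  have hfac := S.factorisation (w.edge 0 (S.d (g ≫ lam)) zero_le)
      (S.d (g ≫ lam) - S.d lam) (S.d lam)
    (by rw [w.deg]; funext i; have h' : S.d lam i ≤ S.d (g ≫ lam) i := hle i; simp; omega)
  have h1 : P (S := S) (w.edge 0 (S.d (g ≫ lam)) zero_le)
      (S.d (g ≫ lam) - S.d lam) (S.d lam)
      ⟨w.vertex (S.d lam), w.edge (S.d lam) (S.d (g ≫ lam)) hle,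
        w.edge 0 (S.d lam) zero_le⟩ := by
    refine ⟨w.deg _ _ hle, ?_, (w.edge_comp 0 (S.d lam) (S.d (g ≫ lam)) zero_le hle).symm⟩
    rw [w.deg]; funext i; simp
  have h2 : P (S := S) (w.edge 0 (S.d (g ≫ lam)) zero_le)
      (S.d (g ≫ lam) - S.d lam) (S.d lam)
      ⟨X, eqToHom h₁ ≫ g, lam ≫ eqToHom h₀.symm⟩ := by
    refine ⟨?_, ?_, ?_⟩
    · rw [S.d_comp, d_eqToHom, zero_add]
      funext i
      have : S.d (g ≫ lam) i = S.d g i + S.d lam i := by rw [S.d_comp]; rfl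
      simp [this]
    · rw [S.d_comp, d_eqToHom, add_zero]
    · rw [heq]; simp
  obtain ⟨e, -, he2⟩ := triple_ext (hfac.unique h1 h2)
  simp only at he2
  exact ⟨e, h₀, he2⟩

lemma cyl_initial_sub {x : InfPath S} {X Y : Γ} {lam : X ⟶ Y}
    (hx : x ∈ cyl (S := S) lam) {r : Fin k → ℕ} (hr : S.d lam ≤ r) :
    cyl (S := S) (x.edge 0 r zero_le) ⊆ cyl (S := S) lam := by
  obtain ⟨hx₁, hx₀, hxe⟩ := hx
  rintro w ⟨h₁, h₀, heq⟩
  have er : S.d (x.edge 0 r zero_le) = r := by rw [x.deg]; funext i; simp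
  have h₁' : w.vertex r = x.vertex r := (congrArg w.vertex er.symm).trans h₁
  have hW : w.edge 0 r zero_le =
      eqToHom h₁' ≫ x.edge 0 r zero_le ≫ eqToHom h₀.symm := by
    rw [edge_congr w (rfl : (0 : Fin k → ℕ) = 0) er.symm zero_le, heq]
    simp [eqToHom_trans]
  have hfac := S.factorisation (w.edge 0 r zero_le) (r - S.d lam) (S.d lam)
    (by rw [w.deg]; funext i; have h' : S.d lam i ≤ r i := hr i; simp; omega)
  have h1 : P (S := S) (w.edge 0 r zero_le) (r - S.d lam) (S.d lam)
      ⟨w.vertex (S.d lam), w.edge (S.d lam) r hr, w.edge 0 (S.d lam) zero_le⟩ := by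
    refine ⟨w.deg _ _ hr, ?_, (w.edge_comp 0 (S.d lam) r zero_le hr).symm⟩
    rw [w.deg]; funext i; simp
  have h2 : P (S := S) (w.edge 0 r zero_le) (r - S.d lam) (S.d lam)
      ⟨x.vertex (S.d lam), eqToHom h₁' ≫ x.edge (S.d lam) r hr,
        x.edge 0 (S.d lam) zero_le ≫ eqToHom h₀.symm⟩ := by
    refine ⟨?_, ?_, ?_⟩
    · rw [S.d_comp, d_eqToHom, zero_add, x.deg]
    · rw [S.d_comp, d_eqToHom, add_zero, x.deg]; funext i; simp
    · rw [hW, x.edge_comp 0 (S.d lam) r zero_le hr]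
      simp
  obtain ⟨e, -, he2⟩ := triple_ext (hfac.unique h1 h2)
  simp only at he2
  refine ⟨e.trans hx₁, h₀.trans hx₀, ?_⟩
  rw [he2, hxe]
  simp [eqToHom_trans]

lemma isOpen_of_cyl_nbhd {U : Set (InfPath S)}
    (h : ∀ z ∈ U, ∃ (X Y : Γ) (lam : X ⟶ Y), z ∈ cyl (S := S) lam ∧ cyl (S := S) lam ⊆ U) :
    IsOpen[pathTopology S] U := by
  have hU : U = ⋃₀ {C : Set (InfPath S) |
      (∃ (X Y : Γ) (lam : X ⟶ Y), C = cyl lam) ∧ C ⊆ U} := by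
    ext z
    constructor
    · intro hz
      obtain ⟨X, Y, lam, hz1, hz2⟩ := h z hz
      exact ⟨cyl lam, ⟨⟨X, Y, lam, rfl⟩, hz2⟩, hz1⟩
    · rintro ⟨C, ⟨-, hCU⟩, hzC⟩
      exact hCU hzC
  rw [hU]
  exact TopologicalSpace.GenerateOpen.sUnion _
    (fun C hC => TopologicalSpace.GenerateOpen.basic C hC.1)

lemma cyl_basis :
    @TopologicalSpace.IsTopologicalBasis (InfPath S) (pathTopology S)
      {U : Set (InfPath S) | ∃ (X Y : Γ) (lam : X ⟶ Y), U = cyl lam} := by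
  letI : TopologicalSpace (InfPath S) := pathTopology S
  refine ⟨?_, ?_, rfl⟩
  · rintro t₁ ⟨X₁, Y₁, l₁, rfl⟩ t₂ ⟨X₂, Y₂, l₂, rfl⟩ x ⟨hm₁, hm₂⟩
    refine ⟨cyl (S := S) (x.edge 0 (S.d l₁ ⊔ S.d l₂) zero_le),
      ⟨_, _, _, rfl⟩, self_mem_cyl x _, ?_⟩
    exact Set.subset_inter (cyl_initial_sub hm₁ le_sup_left) (cyl_initial_sub hm₂ le_sup_right)
  · apply Set.eq_univ_of_forall
    intro x
    exact ⟨cyl (S := S) (x.edge 0 0 zero_le), ⟨_, _, _, rfl⟩, self_mem_cyl x 0⟩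

lemma hd_congr {w : InfPath S} {b : Γ} (H : ∀ n, w.vertex n ⟶ b) {n n' : Fin k → ℕ}
    (e : n = n') : H n = eqToHom (congrArg w.vertex e) ≫ H n' := by subst e; simp

/-- Prepending a morphism `h : vs 0 ⟶ b` to an infinite path `z` built over the
tower `vs`: there is a path `w` lying in the cylinder of `h` with `σ^{d h} w = z`. -/
lemma prepend_tower {vs : ℕ → Γ} {ts : ∀ j, vs (j+1) ⟶ vs j}
    (hts : ∀ j, S.d (ts j) = fun _ => 1)
    {z : InfPath S} {Hz : ∀ n, z.vertex n ⟶ vs 0}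
    (hdz : ∀ n, S.d (Hz n) = n)
    (hcz : ∀ m n (hmn : m ≤ n), z.edge m n hmn ≫ Hz m = Hz n)
    (hclz : ∀ j, ∃ e : z.vertex (fun _ => j) = vs j,
      Hz (fun _ => j) = eqToHom e ≫ tcomp vs ts j)
    {b : Γ} (h : vs 0 ⟶ b) :
    ∃ w : InfPath S, w ∈ cyl (S := S) h ∧ shift (S.d h) w = z := by
  classical
  let vw : ℕ → Γ := fun j => Nat.rec b (fun j' _ => vs j') j
  let tw : ∀ j, vw (j+1) ⟶ vw j :=
    fun j => Nat.casesOn (motive := fun j => vw (j+1) ⟶ vw j) j h ts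
  let Dw : ℕ → Fin k → ℕ :=
    fun j => Nat.casesOn (motive := fun _ => Fin k → ℕ) j 0 (fun j' i => S.d h i + j')
  have hD0 : Dw 0 = 0 := rfl
  have hmono : ∀ j, Dw j ≤ Dw (j+1) := by
    intro j
    cases j with
    | zero => intro i; exact Nat.zero_le _
    | succ j => intro i; show S.d h i + j ≤ S.d h i + (j+1); omega
  have hcof : ∀ n : Fin k → ℕ, ∃ j, n ≤ Dw j := by
    intro n
    refine ⟨Finset.univ.sup n + 1, fun i => ?_⟩
    show n i ≤ S.d h i + Finset.univ.sup n
    have := Finset.le_sup (f := n) (Finset.mem_univ i)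
    omega
  have ht : ∀ j, S.d (tw j) = Dw (j+1) - Dw j := by
    intro j
    cases j with
    | zero =>
        show S.d h = (fun i => S.d h i + 0) - 0
        funext i; simp
    | succ j =>
        show S.d (ts j) = (fun i => S.d h i + (j+1)) - (fun i => S.d h i + j)
        rw [hts]; funext i; show 1 = (S.d h i + (j+1)) - (S.d h i + j); omega
  obtain ⟨w, Hw, hdw, hcw, hclw⟩ := tower_path (S := S) (v := vw) (t := tw) hD0 hmono hcof ht
  have htcomp : ∀ j, tcomp vw tw (j+1) = tcomp vs ts j ≫ h := by
    intro j
    induction j with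
    | zero =>
        show tw 0 ≫ tcomp vw tw 0 = tcomp vs ts 0 ≫ h
        show h ≫ 𝟙 _ = 𝟙 _ ≫ h
        simp
    | succ j ih =>
        show tw (j+1) ≫ tcomp vw tw (j+1) = (ts j ≫ tcomp vs ts j) ≫ h
        show ts j ≫ tcomp vw tw (j+1) = (ts j ≫ tcomp vs ts j) ≫ h
        rw [ih, Category.assoc]
  obtain ⟨ew1, hw1⟩ := hclw 1
  obtain ⟨ew0, hw0⟩ := hclw 0
  have idx1 : S.d h = Dw 1 := by funext i; show S.d h i = S.d h i + 0; simp
  have E : w.vertex (S.d h) = vs 0 := (congrArg w.vertex idx1).trans ew1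
  have hHw0 : Hw 0 = eqToHom ew0 := by
    have h' := hw0
    rw [show tcomp vw tw 0 = 𝟙 (vw 0) from rfl, Category.comp_id] at h'
    exact h'
  have htc1 : tcomp vw tw 1 = h := by
    rw [htcomp 0, show tcomp vs ts 0 = 𝟙 (vs 0) from rfl, Category.id_comp]
  have hHwdh : Hw (S.d h) = eqToHom E ≫ h := by
    rw [hd_congr Hw idx1, hw1, htc1, eqToHom_trans_assoc]
  have hmem : w ∈ cyl (S := S) h := by
    refine ⟨E, ew0, ?_⟩
    have hce : w.edge 0 (S.d h) zero_le ≫ Hw 0 = Hw (S.d h) := hcw 0 (S.d h) zero_le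
    rw [hHw0, hHwdh] at hce
    calc w.edge 0 (S.d h) zero_le
        = (w.edge 0 (S.d h) zero_le ≫ eqToHom ew0) ≫ eqToHom ew0.symm := by simp
      _ = (eqToHom E ≫ h) ≫ eqToHom ew0.symm := by rw [hce]
      _ = eqToHom E ≫ h ≫ eqToHom ew0.symm := by simp
  refine ⟨w, hmem, ?_⟩
  -- the shifted path agrees with `z`
  have hle : ∀ n : Fin k → ℕ, S.d h ≤ n + S.d h := fun n i => Nat.le_add_left _ _
  obtain ⟨e0, he0⟩ := eq_of_d_eq_zero (Hz 0) (hdz 0)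
  refine paths_eq_of_sys (b := vs 0)
    (fun n => w.edge (S.d h) (n + S.d h) (hle n) ≫ eqToHom E) Hz ?_ ?_ hdz hcz ?_
  · intro n
    show S.d (w.edge (S.d h) (n + S.d h) (hle n) ≫ eqToHom E) = n
    rw [S.d_comp, d_eqToHom, add_zero, w.deg]
    funext i; simp
  · intro m n hmn
    show w.edge (m + S.d h) (n + S.d h) (add_le_add hmn le_rfl) ≫
        (w.edge (S.d h) (m + S.d h) (hle m) ≫ eqToHom E)
      = w.edge (S.d h) (n + S.d h) (hle n) ≫ eqToHom E
    rw [← Category.assoc,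
      ← w.edge_comp (S.d h) (m + S.d h) (n + S.d h) (hle m) (add_le_add hmn le_rfl)]
  · intro n
    set j := Finset.univ.sup n with hj
    refine ⟨(fun _ => j), fun i => Finset.le_sup (Finset.mem_univ i), ?_⟩
    obtain ⟨ewj, hwj⟩ := hclw (j+1)
    obtain ⟨ezj, hzj⟩ := hclz j
    have idxj : (fun _ => j) + S.d h = Dw (j+1) := by
      funext i; show j + S.d h i = S.d h i + j; omega
    have E' : w.vertex ((fun _ => j) + S.d h) = z.vertex (fun _ => j) :=
      (congrArg w.vertex idxj).trans (ewj.trans ezj.symm)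
    have hfac := S.factorisation (Hw ((fun _ => j) + S.d h)) (fun _ => j) (S.d h)
      (by rw [hdw])
    have h1 : P (S := S) (Hw ((fun _ => j) + S.d h)) (fun _ => j) (S.d h)
        ⟨w.vertex (S.d h), w.edge (S.d h) ((fun _ => j) + S.d h) (hle _), Hw (S.d h)⟩ := by
      refine ⟨?_, hdw _, hcw _ _ _⟩
      rw [w.deg]; funext i; show (j + S.d h i) - S.d h i = j; omega
    have h2 : P (S := S) (Hw ((fun _ => j) + S.d h)) (fun _ => j) (S.d h)
        ⟨z.vertex 0, eqToHom E' ≫ z.edge 0 (fun _ => j) zero_le, Hz 0 ≫ h⟩ := by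
      refine ⟨?_, ?_, ?_⟩
      · rw [S.d_comp, d_eqToHom, zero_add, z.deg]; funext i; simp
      · rw [S.d_comp, hdz, zero_add]
      · rw [Category.assoc, ← Category.assoc (z.edge 0 (fun _ => j) zero_le), hcz, hzj,
          hd_congr Hw idxj, hwj, htcomp j]
        simp only [Category.assoc, eqToHom_trans_assoc]
    obtain ⟨e'', h1', -⟩ := triple_ext (hfac.unique h1 h2)
    simp only at h1'
    refine ⟨E', ?_⟩
    have hedge : w.edge (S.d h) ((fun _ => j) + S.d h) (hle _) =
        eqToHom E' ≫ z.edge 0 (fun _ => j) zero_le ≫ eqToHom e''.symm := by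
      calc w.edge (S.d h) ((fun _ => j) + S.d h) (hle _)
          = (w.edge (S.d h) ((fun _ => j) + S.d h) (hle _) ≫ eqToHom e'') ≫
              eqToHom e''.symm := by simp
        _ = (eqToHom E' ≫ z.edge 0 (fun _ => j) zero_le) ≫ eqToHom e''.symm := by rw [h1']
        _ = _ := by simp
    show w.edge (S.d h) ((fun _ => j) + S.d h) (hle _) ≫ eqToHom E
      = eqToHom E' ≫ Hz (fun _ => j)
    rw [hedge]
    simp only [Category.assoc]
    rw [eqToHom_trans, Subsingleton.elim (e''.symm.trans E) e0, ← he0]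
    rw [hcz 0 (fun _ => j) zero_le]

/-- From source-freeness, build a tower of degree-`(1,…,1)` edges over any vertex,
together with an infinite path along it. -/
lemma base_tower (hrf : RowFiniteSourceFree S) (u : Γ) :
    ∃ (vs : ℕ → Γ) (ts : ∀ j, vs (j+1) ⟶ vs j), vs 0 = u ∧
      (∀ j, S.d (ts j) = fun _ => 1) ∧
      ∃ (z : InfPath S) (Hz : ∀ n, z.vertex n ⟶ vs 0),
        (∀ n, S.d (Hz n) = n) ∧ (∀ m n (h : m ≤ n), z.edge m n h ≫ Hz m = Hz n) ∧
        (∀ j, ∃ e : z.vertex (fun _ => j) = vs j,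
          Hz (fun _ => j) = eqToHom e ≫ tcomp vs ts j) := by
  classical
  have hstep : ∀ w : Γ, ∃ t : Σ u' : Γ, u' ⟶ w, S.d t.2 = fun _ => 1 :=
    fun w => (hrf w (fun _ => 1)).2
  choose st hst using hstep
  let vs : ℕ → Γ := fun j => Nat.rec u (fun _ w => (st w).1) j
  let ts : ∀ j, vs (j+1) ⟶ vs j := fun j => (st (vs j)).2
  have hts : ∀ j, S.d (ts j) = fun _ => 1 := fun j => hst (vs j)
  refine ⟨vs, ts, rfl, hts, ?_⟩
  have hD0 : (fun _ : Fin k => (0 : ℕ)) = (0 : Fin k → ℕ) := rfl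
  obtain ⟨z, Hz, h1, h2, h3⟩ := tower_path (S := S) (D := fun j => (fun _ => j))
    (v := vs) (t := ts) hD0 (fun j i => Nat.le_succ j)
    (fun n => ⟨Finset.univ.sup n, fun i => Finset.le_sup (Finset.mem_univ i)⟩)
    (fun j => by rw [hts]; funext i; show 1 = (j+1) - j; omega)
  exact ⟨z, Hz, h1, h2, h3⟩

end KGP

/-- for a row-finite source-free `k`-graph, the orbit space `Γ^∞/≃` is
Hausdorff if and only if any two non-shift-equivalent infinite paths `x, y` eventually
pass through vertices `x N`, `y N` with no common upper bound. -/
theorem orbit_space_hausdorff_iff (k : ℕ) (Γ : Type) [SmallCategory Γ]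
    (S : KGraph k Γ) (hrf : RowFiniteSourceFree S) :
    @T2Space _ (orbitTopology S) ↔
      ∀ x y : InfPath S, ¬ ShiftEquiv x y →
        ∃ N : Fin k → ℕ, ∀ u : Γ,
          ¬ (Nonempty (u ⟶ x.vertex N) ∧ Nonempty (u ⟶ y.vertex N)) := by
  classical
  constructor
  · -- Hausdorff implies the separation condition
    intro hT2 x y hne
    by_contra hcon
    push_neg at hcon
    have hxy : Quot.mk (ShiftEquiv (S := S)) x ≠ Quot.mk (ShiftEquiv (S := S)) y :=
      fun hq => hne (KGP.quot_mk_eq_iff.mp hq)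
    obtain ⟨U', V', hU', hV', hxU', hyV', hdis⟩ := hT2.t2 hxy
    letI : TopologicalSpace (InfPath S) := pathTopology S
    have hUo : IsOpen (Quot.mk (ShiftEquiv (S := S)) ⁻¹' U') := hU'
    have hVo : IsOpen (Quot.mk (ShiftEquiv (S := S)) ⁻¹' V') := hV'
    obtain ⟨C1, ⟨X₁, Y₁, l₁, rfl⟩, hxC, hCU⟩ :=
      KGP.cyl_basis.exists_subset_of_mem_open hxU' hUo
    obtain ⟨C2, ⟨X₂, Y₂, l₂, rfl⟩, hyC, hCV⟩ :=
      KGP.cyl_basis.exists_subset_of_mem_open hyV' hVo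
    obtain ⟨u, ⟨f⟩, ⟨g⟩⟩ := hcon (S.d l₁ ⊔ S.d l₂)
    obtain ⟨vs, ts, hvs0, hts, z, Hz, hdz, hcz, hclz⟩ := KGP.base_tower hrf u
    set hx' : vs 0 ⟶ x.vertex 0 :=
      (eqToHom hvs0 ≫ f) ≫ x.edge 0 (S.d l₁ ⊔ S.d l₂) zero_le with hhx
    set hy' : vs 0 ⟶ y.vertex 0 :=
      (eqToHom hvs0 ≫ g) ≫ y.edge 0 (S.d l₁ ⊔ S.d l₂) zero_le with hhy
    obtain ⟨w1, hw1mem, hw1shift⟩ := KGP.prepend_tower hts hdz hcz hclz hx'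
    obtain ⟨w2, hw2mem, hw2shift⟩ := KGP.prepend_tower hts hdz hcz hclz hy'
    have h1 : Quot.mk (ShiftEquiv (S := S)) w1 ∈ U' :=
      hCU (KGP.cyl_initial_sub hxC le_sup_left (KGP.cyl_comp_sub _ _ hw1mem))
    have h2 : Quot.mk (ShiftEquiv (S := S)) w2 ∈ V' :=
      hCV (KGP.cyl_initial_sub hyC le_sup_right (KGP.cyl_comp_sub _ _ hw2mem))
    have hseq : ShiftEquiv w1 w2 := ⟨S.d hx', S.d hy', hw1shift.trans hw2shift.symm⟩
    have hquot : Quot.mk (ShiftEquiv (S := S)) w1 = Quot.mk (ShiftEquiv (S := S)) w2 :=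
      Quot.sound hseq
    exact Set.disjoint_left.mp hdis h1 (hquot ▸ h2)
  · -- the separation condition implies Hausdorff
    intro hcond
    letI : TopologicalSpace (InfPath S) := pathTopology S
    refine ⟨fun a b hab => ?_⟩
    obtain ⟨x, rfl⟩ := Quot.exists_rep a
    obtain ⟨y, rfl⟩ := Quot.exists_rep b
    have hne : ¬ ShiftEquiv x y := fun h => hab (KGP.quot_mk_eq_iff.mpr h)
    obtain ⟨N, hN⟩ := hcond x y hne
    set U : Set (InfPath S) := {z | ∃ p, Nonempty (z.vertex p ⟶ x.vertex N)} with hU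
    set V : Set (InfPath S) := {z | ∃ p, Nonempty (z.vertex p ⟶ y.vertex N)} with hV
    have invU : ∀ z w : InfPath S, ShiftEquiv z w → z ∈ U → w ∈ U := by
      rintro z w ⟨a', b', hab'⟩ ⟨p, ⟨m⟩⟩
      refine ⟨p + b', ⟨?_⟩⟩
      have hv : w.vertex (p + b') = z.vertex (p + a') := by
        have h' := congrArg (fun t : InfPath S => t.vertex p) hab'
        exact h'.symm
      rw [hv]
      exact z.edge p (p + a') (fun i => Nat.le_add_right _ _) ≫ m
    have invV : ∀ z w : InfPath S, ShiftEquiv z w → z ∈ V → w ∈ V := by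
      rintro z w ⟨a', b', hab'⟩ ⟨p, ⟨m⟩⟩
      refine ⟨p + b', ⟨?_⟩⟩
      have hv : w.vertex (p + b') = z.vertex (p + a') := by
        have h' := congrArg (fun t : InfPath S => t.vertex p) hab'
        exact h'.symm
      rw [hv]
      exact z.edge p (p + a') (fun i => Nat.le_add_right _ _) ≫ m
    have hUV : ∀ z : InfPath S, z ∈ U → z ∈ V → False := by
      rintro z ⟨p, ⟨m1⟩⟩ ⟨q, ⟨m2⟩⟩
      exact hN (z.vertex (p ⊔ q))
        ⟨⟨z.edge p (p ⊔ q) le_sup_left ≫ m1⟩, ⟨z.edge q (p ⊔ q) le_sup_right ≫ m2⟩⟩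
    have hUopen : IsOpen U := by
      refine KGP.isOpen_of_cyl_nbhd ?_
      rintro z ⟨p, hp⟩
      refine ⟨_, _, z.edge 0 p zero_le, KGP.self_mem_cyl z p, ?_⟩
      rintro w ⟨h₁, h₀, -⟩
      exact ⟨S.d (z.edge 0 p zero_le), by rw [h₁]; exact hp⟩
    have hVopen : IsOpen V := by
      refine KGP.isOpen_of_cyl_nbhd ?_
      rintro z ⟨p, hp⟩
      refine ⟨_, _, z.edge 0 p zero_le, KGP.self_mem_cyl z p, ?_⟩
      rintro w ⟨h₁, h₀, -⟩
      exact ⟨S.d (z.edge 0 p zero_le), by rw [h₁]; exact hp⟩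
    have hpreU : Quot.mk (ShiftEquiv (S := S)) ⁻¹'
        (Quot.mk (ShiftEquiv (S := S)) '' U) = U := by
      apply Set.Subset.antisymm
      · rintro w ⟨z, hz, hq⟩
        exact invU z w (KGP.quot_mk_eq_iff.mp hq) hz
      · intro w hw
        exact ⟨w, hw, rfl⟩
    have hpreV : Quot.mk (ShiftEquiv (S := S)) ⁻¹'
        (Quot.mk (ShiftEquiv (S := S)) '' V) = V := by
      apply Set.Subset.antisymm
      · rintro w ⟨z, hz, hq⟩
        exact invV z w (KGP.quot_mk_eq_iff.mp hq) hz
      · intro w hw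
        exact ⟨w, hw, rfl⟩
    refine ⟨Quot.mk _ '' U, Quot.mk _ '' V, ?_, ?_,
      ⟨x, ⟨N, ⟨𝟙 _⟩⟩, rfl⟩, ⟨y, ⟨N, ⟨𝟙 _⟩⟩, rfl⟩, ?_⟩
    · show @IsOpen _ ((pathTopology S).coinduced (Quot.mk (ShiftEquiv (S := S))))
        (Quot.mk (ShiftEquiv (S := S)) '' U)
      rw [isOpen_coinduced, hpreU]
      exact hUopen
    · show @IsOpen _ ((pathTopology S).coinduced (Quot.mk (ShiftEquiv (S := S))))
        (Quot.mk (ShiftEquiv (S := S)) '' V)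
      rw [isOpen_coinduced, hpreV]
      exact hVopen
    · rw [Set.disjoint_left]
      rintro q ⟨z1, hz1, rfl⟩ ⟨z2, hz2, hq⟩
      exact hUV z1 hz1 (invV z2 z1 (KGP.quot_mk_eq_iff.mp hq) hz2)
end

section
/- Let k be a natural number and let Γ be a singly connected, row-finite, source-free k-graph, with the partial order ≤ on objects given by u ≤ w if and only if there is a morphism w ⟶ u (i.e. uΓw ≠ ∅). Then a subset F of the objects of Γ is an ultrafilter for (Γ⁰, ≤) if and only if there is an infinite path x ∈ Γ^∞ such that F = {y(0) : y ∈ Γ^∞, y shift equivalent to x}. -/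
open CategoryTheory

open InfPath


open InfPath

/-- The order on vertices: `u ≤ w` iff there is a morphism `w ⟶ u` (i.e. `uΓw ≠ ∅`). -/
def vle {Γ : Type} [SmallCategory Γ] (u w : Γ) : Prop := Nonempty (w ⟶ u)

/-- A filter for `(Γ⁰, ≤)`: a nonempty, upward-directed, downward-closed set of
vertices. -/
def IsVertexFilter {Γ : Type} [SmallCategory Γ] (F : Set Γ) : Prop :=
  F.Nonempty ∧
  (∀ u ∈ F, ∀ v ∈ F, ∃ w ∈ F, vle u w ∧ vle v w) ∧
  (∀ v ∈ F, ∀ u, vle u v → u ∈ F)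

/-- An ultrafilter for `(Γ⁰, ≤)`: a filter maximal under inclusion among filters. -/
def IsVertexUltrafilter {Γ : Type} [SmallCategory Γ] (F : Set Γ) : Prop :=
  IsVertexFilter F ∧ ∀ F' : Set Γ, IsVertexFilter F' → F ⊆ F' → F' = F


section Aux

variable {k : ℕ} {Γ : Type} [SmallCategory Γ] {S : KGraph k Γ}

lemma d_eqToHom {X Y : Γ} (h : X = Y) : S.d (eqToHom h) = 0 := by
  subst h; rw [eqToHom_refl]; exact S.d_id X

lemma exists_mid {X Z : Γ} (c : X ⟶ Z) (n : Fin k → ℕ) (h : n ≤ S.d c) :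
    ∃ p : Σ Y : Γ, (X ⟶ Y) × (Y ⟶ Z), S.d p.2.2 = n ∧ p.2.1 ≫ p.2.2 = c := by
  obtain ⟨p, ⟨h1, h2, h3⟩, -⟩ := S.factorisation c (S.d c - n) n (tsub_add_cancel_of_le h).symm
  exact ⟨p, h2, h3⟩

lemma sandwich_uniq (hsc : ∀ X Y : Γ, Subsingleton (X ⟶ Y)) {X Z W W' : Γ}
    (a : X ⟶ W) (b : W ⟶ Z) (a' : X ⟶ W') (b' : W' ⟶ Z)
    (h : S.d b = S.d b') : (⟨W, b⟩ : Σ Y : Γ, Y ⟶ Z) = ⟨W', b'⟩ := by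
  have hc : a' ≫ b' = a ≫ b := (hsc _ _).allEq _ _
  have hda : S.d a' = S.d a := by
    have h2 : S.d a + S.d b = S.d a' + S.d b' := by rw [← S.d_comp, ← S.d_comp, hc]
    rw [← h] at h2
    exact (add_right_cancel h2).symm
  obtain ⟨t, -, hu⟩ := S.factorisation (a ≫ b) (S.d a) (S.d b) (S.d_comp a b)
  have e1 := hu ⟨W, a, b⟩ ⟨rfl, rfl, rfl⟩
  have e2 := hu ⟨W', a', b'⟩ ⟨hda, h.symm, hc⟩
  exact congrArg (fun s : Σ Y : Γ, (X ⟶ Y) × (Y ⟶ Z) => (⟨s.1, s.2.2⟩ : Σ Y : Γ, Y ⟶ Z))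
    (e1.trans e2.symm)

lemma sandwich_vertex (hsc : ∀ X Y : Γ, Subsingleton (X ⟶ Y)) {X Z W W' : Γ}
    (a : X ⟶ W) (b : W ⟶ Z) (a' : X ⟶ W') (b' : W' ⟶ Z)
    (h : S.d b = S.d b') : W = W' :=
  congrArg Sigma.fst (sandwich_uniq hsc a b a' b' h)

/-- Build an infinite path from vertex and edge data; the functoriality conditions are
automatic when hom-sets are subsingletons. -/
def mkPath (hsc : ∀ X Y : Γ, Subsingleton (X ⟶ Y)) (V : (Fin k → ℕ) → Γ)
    (E : ∀ m n : Fin k → ℕ, m ≤ n → (V n ⟶ V m))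
    (hd : ∀ m n h, S.d (E m n h) = n - m) : InfPath S where
  vertex := V
  edge := E
  edge_refl n := (hsc _ _).allEq _ _
  edge_comp m n p h₁ h₂ := (hsc _ _).allEq _ _
  deg := hd

lemma path_ext (hsc : ∀ X Y : Γ, Subsingleton (X ⟶ Y)) {x y : InfPath S}
    (h : x.vertex = y.vertex) : x = y := by
  obtain ⟨xv, xe, h1, h2, h3⟩ := x
  obtain ⟨yv, ye, h4, h5, h6⟩ := y
  have h' : xv = yv := h
  subst h'
  have he : xe = ye := by
    funext m n hmn
    exact (hsc _ _).allEq _ _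
  subst he
  rfl

/-- The set of vertices reachable (downwards) from the tail of an infinite path. -/
def reachSet (x : InfPath S) : Set Γ := {v | ∃ n, Nonempty (x.vertex n ⟶ v)}

/-- The key construction: from a chain of vertices `w t` equipped with morphisms to a
base vertex `v` whose degrees grow unboundedly, build an infinite path `x` such that
any vertex `W` sandwiched between some `w t` and `v` occurs as `x.vertex (S.d b)`. -/
lemma buildPath (hsc : ∀ X Y : Γ, Subsingleton (X ⟶ Y)) (v : Γ) (w : ℕ → Γ)
    (Fm : ∀ t, w t ⟶ v) (hg : ∀ t, Nonempty (w (t + 1) ⟶ w t))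
    (hgrow : ∀ n : Fin k → ℕ, ∃ t, n ≤ S.d (Fm t)) :
    ∃ x : InfPath S, ∀ (t : ℕ) (W : Γ) (a : w t ⟶ W) (b : W ⟶ v),
      x.vertex (S.d b) = W := by
  have hchain : ∀ t t', t ≤ t' → Nonempty (w t' ⟶ w t) := by
    intro t t' h
    induction h with
    | refl => exact ⟨𝟙 _⟩
    | step h ih => exact ⟨(hg _).some ≫ ih.some⟩
  have hmono : ∀ t t', t ≤ t' → S.d (Fm t) ≤ S.d (Fm t') := by
    intro t t' h
    obtain ⟨G⟩ := hchain t t' h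
    have hG : Fm t' = G ≫ Fm t := (hsc _ _).allEq _ _
    rw [hG, S.d_comp]
    exact le_add_self
  choose τ hτ using hgrow
  have mid0 : ∀ (n : Fin k → ℕ) (t : ℕ), n ≤ S.d (Fm t) →
      ∃ p : Σ Y : Γ, (w t ⟶ Y) × (Y ⟶ v), S.d p.2.2 = n :=
    fun n t h => (exists_mid (Fm t) n h).imp fun p hp => hp.1
  choose M hM using mid0
  have dir : ∀ (n : Fin k → ℕ) (t t' : ℕ), t ≤ t' → ∀ (h : n ≤ S.d (Fm t))
      (h' : n ≤ S.d (Fm t')), (M n t h).1 = (M n t' h').1 := by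
    intro n t t' htt' h h'
    obtain ⟨G⟩ := hchain t t' htt'
    exact sandwich_vertex hsc (G ≫ (M n t h).2.1) (M n t h).2.2
      (M n t' h').2.1 (M n t' h').2.2 (by rw [hM, hM])
  have stab : ∀ (n : Fin k → ℕ) (t t' : ℕ) (h : n ≤ S.d (Fm t))
      (h' : n ≤ S.d (Fm t')), (M n t h).1 = (M n t' h').1 := by
    intro n t t' h h'
    have h1 : n ≤ S.d (Fm (max t t')) := le_trans h (hmono _ _ (le_max_left _ _))
    exact (dir n t (max t t') (le_max_left _ _) h h1).trans
      (dir n t' (max t t') (le_max_right _ _) h' h1).symm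
  have edge0 : ∀ (m n : Fin k → ℕ), m ≤ n →
      ∃ e : (M n (τ n) (hτ n)).1 ⟶ (M m (τ m) (hτ m)).1, S.d e = n - m := by
    intro m n h
    have hn : n ≤ S.d (Fm (τ n)) := hτ n
    have hm : m ≤ S.d (Fm (τ n)) := le_trans h hn
    have hb : m ≤ S.d ((M n (τ n) hn).2.2) := by rw [hM]; exact h
    obtain ⟨⟨P, p, q⟩, hq, hpq⟩ := exists_mid ((M n (τ n) hn).2.2) m hb
    have hP : P = (M m (τ n) hm).1 :=
      sandwich_vertex hsc ((M n (τ n) hn).2.1 ≫ p) q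
        ((M m (τ n) hm).2.1) ((M m (τ n) hm).2.2) (by rw [hq, hM])
    have hVm : P = (M m (τ m) (hτ m)).1 := hP.trans (stab m (τ n) (τ m) hm (hτ m))
    have hdp : S.d p = n - m := by
      have hsum : S.d p + S.d q = n := by
        rw [← S.d_comp, hpq, hM]
      rw [hq] at hsum
      exact eq_tsub_of_add_eq hsum
    exact ⟨p ≫ eqToHom hVm, by rw [S.d_comp, d_eqToHom, hdp, add_zero]⟩
  choose E hE using edge0
  refine ⟨mkPath hsc (fun n => (M n (τ n) (hτ n)).1) E hE, ?_⟩
  intro t W a b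
  have hn : S.d b ≤ S.d (Fm t) := by
    have hab : Fm t = a ≫ b := (hsc _ _).allEq _ _
    rw [hab, S.d_comp]
    exact le_add_self
  have h1 : W = (M (S.d b) t hn).1 :=
    sandwich_vertex hsc a b (M _ t hn).2.1 (M _ t hn).2.2 (hM _ _ _).symm
  exact (stab (S.d b) (τ (S.d b)) t (hτ _) hn).trans h1.symm

end Aux

section Orbit

variable {k : ℕ} {Γ : Type} [SmallCategory Γ] {S : KGraph k Γ}

lemma orb_eq_reach (hsc : ∀ X Y : Γ, Subsingleton (X ⟶ Y)) (x : InfPath S) :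
    {v | ∃ y : InfPath S, ShiftEquiv y x ∧ y.vertex 0 = v} = reachSet x := by
  ext v
  constructor
  · rintro ⟨y, ⟨p, q, hpq⟩, rfl⟩
    have h0 : y.vertex (0 + p) = x.vertex (0 + q) :=
      congrArg (fun z : InfPath S => z.vertex 0) hpq
    rw [zero_add, zero_add] at h0
    exact ⟨q, ⟨eqToHom h0.symm ≫ y.edge 0 p zero_le⟩⟩
  · rintro ⟨q, ⟨g⟩⟩
    set z := shift q x with hzdef
    have h0 : z.vertex 0 = x.vertex q := congrArg x.vertex (zero_add q)
    set g' : z.vertex 0 ⟶ v := eqToHom h0 ≫ g with hg'def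
    have hdg' : S.d g' = S.d g := by
      rw [hg'def, S.d_comp, d_eqToHom, zero_add]
    set w : ℕ → Γ := fun t => z.vertex (fun _ => t) with hwdef
    set Fm : ∀ t, w t ⟶ v := fun t => z.edge 0 (fun _ => t) zero_le ≫ g' with hFmdef
    have hFmdeg : ∀ t, S.d (Fm t) = (fun _ => t) + S.d g := by
      intro t
      rw [hFmdef, S.d_comp, z.deg, hdg', tsub_zero]
    have hg2 : ∀ t, Nonempty (w (t + 1) ⟶ w t) :=
      fun t => ⟨z.edge _ _ (fun i => Nat.le_succ t)⟩
    have hgrow : ∀ n : Fin k → ℕ, ∃ t, n ≤ S.d (Fm t) := by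
      intro n
      refine ⟨∑ i, n i, ?_⟩
      rw [hFmdeg]
      intro i
      exact le_trans (Finset.single_le_sum (fun j _ => Nat.zero_le (n j))
        (Finset.mem_univ i)) le_self_add
    obtain ⟨y, hy⟩ := buildPath hsc v w Fm hg2 hgrow
    have hy0 : y.vertex 0 = v := by
      have h := hy 0 v (Fm 0) (𝟙 v)
      rwa [S.d_id] at h
    have hkey : ∀ m : Fin k → ℕ, y.vertex (m + S.d g) = z.vertex m := by
      intro m
      have hm : m ≤ (fun _ => ∑ i, m i : Fin k → ℕ) := fun i =>
        Finset.single_le_sum (fun j _ => Nat.zero_le (m j)) (Finset.mem_univ i)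
      have h := hy (∑ i, m i) (z.vertex m) (z.edge m _ hm) (z.edge 0 m zero_le ≫ g')
      rwa [show S.d (z.edge 0 m zero_le ≫ g') = m + S.d g by
        rw [S.d_comp, z.deg, hdg', tsub_zero]] at h
    refine ⟨y, ⟨S.d g, q, ?_⟩, hy0⟩
    apply path_ext hsc
    funext m
    exact hkey m

lemma reach_filter (x : InfPath S) : IsVertexFilter (reachSet x) := by
  refine ⟨⟨x.vertex 0, 0, ⟨𝟙 _⟩⟩, ?_, ?_⟩
  · rintro u ⟨n, ⟨f⟩⟩ v' ⟨m, ⟨g⟩⟩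
    exact ⟨x.vertex (n ⊔ m), ⟨n ⊔ m, ⟨𝟙 _⟩⟩,
      ⟨x.edge n (n ⊔ m) le_sup_left ≫ f⟩, ⟨x.edge m (n ⊔ m) le_sup_right ≫ g⟩⟩
  · rintro v' ⟨n, ⟨f⟩⟩ u ⟨g⟩
    exact ⟨n, ⟨f ≫ g⟩⟩

lemma reach_max (hsc : ∀ X Y : Γ, Subsingleton (X ⟶ Y)) (x : InfPath S) {F' : Set Γ}
    (hF' : IsVertexFilter F') (hsub : reachSet x ⊆ F') : F' ⊆ reachSet x := by
  intro w hw
  obtain ⟨-, hdir, -⟩ := hF'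
  obtain ⟨z₀, hz₀F, ⟨g₀⟩, ⟨f₀⟩⟩ := hdir w hw (x.vertex 0) (hsub ⟨0, ⟨𝟙 _⟩⟩)
  obtain ⟨z, hzF, ⟨a⟩, ⟨b⟩⟩ := hdir z₀ hz₀F (x.vertex (S.d f₀)) (hsub ⟨S.d f₀, ⟨𝟙 _⟩⟩)
  have hz : z₀ = x.vertex (S.d f₀) :=
    sandwich_vertex hsc a f₀ b (x.edge 0 (S.d f₀) zero_le)
      (by rw [x.deg, tsub_zero])
  exact ⟨S.d f₀, ⟨eqToHom hz.symm ≫ g₀⟩⟩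

end Orbit

section Main

variable {k : ℕ} {Γ : Type} [SmallCategory Γ] {S : KGraph k Γ}

lemma filter_sub_reach (hsc : ∀ X Y : Γ, Subsingleton (X ⟶ Y))
    (hrf : RowFiniteSourceFree S) {F : Set Γ} (hF : IsVertexFilter F) :
    ∃ x : InfPath S, F ⊆ reachSet x := by
  classical
  obtain ⟨⟨v₀, hv₀⟩, hdir, hdown⟩ := hF
  -- the sigma type of morphisms into `v₀` is countable
  have hBcount : Countable (Σ u : Γ, u ⟶ v₀) := by
    have h1 : (Set.univ : Set (Σ u : Γ, u ⟶ v₀)).Countable := by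
      have he : (Set.univ : Set (Σ u : Γ, u ⟶ v₀)) =
          ⋃ b : Fin k → ℕ, {t | S.d t.2 = b} := by
        ext t
        simp only [Set.mem_univ, Set.mem_iUnion, Set.mem_setOf_eq, true_iff]
        exact ⟨S.d t.2, rfl⟩
      rw [he]
      exact Set.countable_iUnion fun b => ((hrf v₀ b).1).countable
    exact Set.countable_univ_iff.mp h1
  set A : Set Γ := {u | u ∈ F ∧ Nonempty (u ⟶ v₀)} with hAdef
  have hAcount : A.Countable := by
    have hsub : A ⊆ Set.range (fun t : Σ u : Γ, u ⟶ v₀ => t.1) := by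
      rintro u ⟨hu, ⟨f⟩⟩
      exact ⟨⟨u, f⟩, rfl⟩
    exact (Set.countable_range _).mono hsub
  have hAne : A.Nonempty := ⟨v₀, hv₀, ⟨𝟙 _⟩⟩
  obtain ⟨e, he⟩ := hAcount.exists_eq_range hAne
  have heA : ∀ t, e t ∈ A := fun t => he ▸ Set.mem_range_self t
  have heF : ∀ t, e t ∈ F := fun t => (heA t).1
  -- a cofinal chain in F
  have hstep : ∀ (u : Γ), u ∈ F → ∀ t : ℕ,
      ∃ u', u' ∈ F ∧ Nonempty (u' ⟶ u) ∧ Nonempty (u' ⟶ e t) := by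
    intro u hu t
    obtain ⟨w', hw', h1, h2⟩ := hdir u hu (e t) (heF t)
    exact ⟨w', hw', h1, h2⟩
  let ch : ℕ → {u : Γ // u ∈ F} := fun t => Nat.rec ⟨v₀, hv₀⟩
    (fun t prev => ⟨(hstep prev.1 prev.2 t).choose, (hstep prev.1 prev.2 t).choose_spec.1⟩) t
  let u : ℕ → Γ := fun t => (ch t).1
  have hcons : ∀ t, Nonempty (u (t + 1) ⟶ u t) :=
    fun t => (hstep (ch t).1 (ch t).2 t).choose_spec.2.1
  have hce : ∀ t, Nonempty (u (t + 1) ⟶ e t) :=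
    fun t => (hstep (ch t).1 (ch t).2 t).choose_spec.2.2
  have hchain : ∀ {t t'}, t ≤ t' → Nonempty (u t' ⟶ u t) := by
    intro t t' h
    induction h with
    | refl => exact ⟨𝟙 _⟩
    | step h ih => exact ⟨(hcons _).some ≫ ih.some⟩
  have hcof : ∀ p ∈ F, ∃ t, Nonempty (u t ⟶ p) := by
    intro p hp
    obtain ⟨w', hw'F, h1, h2⟩ := hdir p hp v₀ hv₀
    have hwA : w' ∈ A := ⟨hw'F, h2⟩
    rw [he] at hwA
    obtain ⟨t, ht⟩ := hwA
    exact ⟨t + 1, ⟨(hce t).some ≫ eqToHom ht ≫ h1.some⟩⟩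
  -- degree bookkeeping along the chain
  let CH : ∀ {t t'}, t ≤ t' → (u t' ⟶ u t) := fun h => (hchain h).some
  let D : ℕ → Fin k → ℕ := fun t => S.d (CH (Nat.zero_le t))
  have hD : ∀ {t t'} (h : t ≤ t'), S.d (CH h) + D t = D t' := by
    intro t t' h
    have hcomp : CH (Nat.zero_le t') = CH h ≫ CH (Nat.zero_le t) := (hsc _ _).allEq _ _
    show S.d (CH h) + S.d (CH (Nat.zero_le t)) = S.d (CH (Nat.zero_le t'))
    rw [hcomp, S.d_comp]
  have hDmono : ∀ {t t'}, t ≤ t' → D t ≤ D t' := by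
    intro t t' h
    rw [← hD h]
    exact le_add_self
  let E : ℕ → Fin k → ℕ := fun t => D t ⊔ (fun _ => t)
  have hDE : ∀ t, D t ≤ E t := fun t => le_sup_left
  have hEmono : ∀ {t t'}, t ≤ t' → E t ≤ E t' :=
    fun h => sup_le_sup (hDmono h) (fun i => h)
  -- the finite nonempty inverse system
  let T : ℕ → Type := fun t => {p : Σ w' : Γ, w' ⟶ u t // S.d p.2 = E t - D t}
  have hTfin : ∀ t, Finite (T t) := fun t => (hrf (u t) (E t - D t)).1.to_subtype
  have hTne : ∀ t, Nonempty (T t) := by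
    intro t
    obtain ⟨p, hp⟩ := (hrf (u t) (E t - D t)).2
    exact ⟨⟨p, hp⟩⟩
  have hdc : ∀ {t t'} (h : t ≤ t') (p : T t'), E t - D t ≤ S.d (p.1.2 ≫ CH h) := by
    intro t t' h p
    rw [S.d_comp, p.2]
    have h1 : S.d (CH h) = D t' - D t := eq_tsub_of_add_eq (hD h)
    rw [h1, tsub_add_tsub_cancel (hDE t') (hDmono h)]
    exact tsub_le_tsub_right (hEmono h) _
  let mid : ∀ {t t'} (h : t ≤ t') (p : T t'), Σ Y : Γ, (p.1.1 ⟶ Y) × (Y ⟶ u t) :=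
    fun {t t'} h p => (exists_mid (p.1.2 ≫ CH h) (E t - D t) (hdc h p)).choose
  have hmid : ∀ {t t'} (h : t ≤ t') (p : T t'), S.d (mid h p).2.2 = E t - D t ∧
      (mid h p).2.1 ≫ (mid h p).2.2 = p.1.2 ≫ CH h :=
    fun {t t'} h p => (exists_mid (p.1.2 ≫ CH h) (E t - D t) (hdc h p)).choose_spec
  let ρ : ∀ {t t'}, t ≤ t' → T t' → T t :=
    fun {t t'} h p => ⟨⟨(mid h p).1, (mid h p).2.2⟩, (hmid h p).1⟩
  have ρ_eq : ∀ {t t'} (h : t ≤ t') (p : T t') (q : T t),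
      Nonempty (p.1.1 ⟶ q.1.1) → ρ h p = q := by
    intro t t' h p q hq
    apply Subtype.ext
    exact sandwich_uniq hsc (mid h p).2.1 (mid h p).2.2 hq.some q.1.2
      (by rw [(hmid h p).1, q.2])
  let X : ℕᵒᵖ ⥤ Type := {
    obj := fun t => T t.unop
    map := fun {a b} f => TypeCat.ofHom (fun p => ρ (leOfHom f.unop) p)
    map_id := by
      intro a
      apply TypeCat.homEquiv.injective
      funext p
      exact ρ_eq (le_refl a.unop) p p ⟨𝟙 _⟩
    map_comp := by
      intro a b c f g
      apply TypeCat.homEquiv.injective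
      funext p
      exact ρ_eq (leOfHom (f ≫ g).unop) p (ρ (leOfHom g.unop) (ρ (leOfHom f.unop) p))
        ⟨(mid (leOfHom f.unop) p).2.1 ≫ (mid (leOfHom g.unop) (ρ (leOfHom f.unop) p)).2.1⟩ }
  haveI : ∀ j : ℕᵒᵖ, Finite (X.obj j) := fun j => hTfin j.unop
  haveI : ∀ j : ℕᵒᵖ, Nonempty (X.obj j) := fun j => hTne j.unop
  obtain ⟨sec, hsec⟩ := nonempty_sections_of_finite_inverse_system X
  let w : ℕ → Γ := fun t => (sec (Opposite.op t)).1.1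
  let Fm : ∀ t, w t ⟶ v₀ := fun t => (sec (Opposite.op t)).1.2 ≫ CH (Nat.zero_le t)
  have hFmdeg : ∀ t, S.d (Fm t) = E t := by
    intro t
    show S.d (_ ≫ _) = E t
    rw [S.d_comp, (sec (Opposite.op t)).2]
    show E t - D t + D t = E t
    exact tsub_add_cancel_of_le (hDE t)
  have hg : ∀ t, Nonempty (w (t + 1) ⟶ w t) := by
    intro t
    have h1 : X.map ((homOfLE (Nat.le_succ t)).op) (sec (Opposite.op (t + 1))) =
        sec (Opposite.op t) := hsec _
    exact ⟨(mid (Nat.le_succ t) (sec (Opposite.op (t + 1)))).2.1 ≫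
      eqToHom (congrArg (fun z : T t => z.1.1) h1)⟩
  have hgrow : ∀ n : Fin k → ℕ, ∃ t, n ≤ S.d (Fm t) := by
    intro n
    refine ⟨∑ i, n i, ?_⟩
    rw [hFmdeg]
    intro i
    show n i ≤ D (∑ j, n j) i ⊔ (∑ j, n j)
    exact le_trans (Finset.single_le_sum (fun j _ => Nat.zero_le (n j))
      (Finset.mem_univ i)) le_sup_right
  obtain ⟨x, hx⟩ := buildPath hsc v₀ w Fm hg hgrow
  refine ⟨x, ?_⟩
  intro p hp
  obtain ⟨t, ⟨f⟩⟩ := hcof p hp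
  have h1 : x.vertex (S.d (Fm t)) = w t := hx t (w t) (𝟙 _) (Fm t)
  exact ⟨S.d (Fm t), ⟨eqToHom h1 ≫ (sec (Opposite.op t)).1.2 ≫ f⟩⟩

end Main
/-- in a singly connected row-finite source-free `k`-graph, the
ultrafilters for `(Γ⁰, ≤)` are exactly the vertex sets of shift-equivalence classes of
infinite paths. -/
theorem ultrafilter_iff_orbit_vertex_set (k : ℕ) (Γ : Type) [SmallCategory Γ]
    (S : KGraph k Γ) (hsc : ∀ X Y : Γ, Subsingleton (X ⟶ Y))
    (hrf : RowFiniteSourceFree S) (F : Set Γ) :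
    IsVertexUltrafilter F ↔
      ∃ x : InfPath S, F = {v | ∃ y : InfPath S, ShiftEquiv y x ∧ y.vertex 0 = v} := by
  constructor
  · rintro ⟨hFfil, hFmax⟩
    obtain ⟨x, hsub⟩ := filter_sub_reach hsc hrf hFfil
    refine ⟨x, ?_⟩
    rw [orb_eq_reach hsc x]
    exact (hFmax (reachSet x) (reach_filter x) hsub).symm
  · rintro ⟨x, rfl⟩
    rw [orb_eq_reach hsc x]
    exact ⟨reach_filter x, fun F' hF' hsub =>
      Set.Subset.antisymm (reach_max hsc x hF' hsub) hsub⟩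
end
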